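/- Let V : ℝ → M_d(ℂ) be T-periodic, and let U_0(t) be a time evolution such that U_0(t + lT) = U_0(t) X^l for a unitary X with X^N = 1 (for 0 ≤ t < T, l ∈ ℤ). Define V_m = (1/(NT)) ∫_0^{NT} U_0(t)^† V(t) U_0(t) e^{imωt/N} dt with ω = 2π/T. Then X V_m X^{-1} = e^{2πim/N} V_m. -/

import Mathlib

set_option autoImplicit false
set_option maxHeartbeats 1000000
set_option synthInstance.maxHeartbeats 400000
open Complex Real

section Aux

variable {d : ℕ}

local notation "E" => EuclideanSpace ℂ (Fin d) →L[ℂ] EuclideanSpace ℂ (Fin d)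

/-- Conjugation by a pair of elements as a continuous linear map. -/
noncomputable def conjCLM (a b : E) : E →L[ℂ] E :=
  ((ContinuousLinearMap.mul ℂ E).flip b).comp (ContinuousLinearMap.mul ℂ E a)

@[simp] lemma conjCLM_apply (a b x : E) : conjCLM a b x = a * x * b := rfl

end Aux

/-- If `U₀(t + lT) = U₀(t) Xˡ` for a unitary `X` with `X^N = 1` and `V` is `T`-periodic, then
the Fourier components `V_m = (1/NT) ∫₀^{NT} U₀(t)† V(t) U₀(t) e^{imωt/N} dt` (with `ω = 2π/T`)
satisfy `X V_m X⁻¹ = e^{2πim/N} V_m`. -/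
theorem fourier_component_covariance {d : ℕ} (N : ℕ) (hN : 0 < N) (T : ℝ) (hT : 0 < T)
    (V U₀ : ℝ → (EuclideanSpace ℂ (Fin d) →L[ℂ] EuclideanSpace ℂ (Fin d)))
    (hVcont : Continuous V) (hVper : ∀ t, V (t + T) = V t)
    (X : (EuclideanSpace ℂ (Fin d) →L[ℂ] EuclideanSpace ℂ (Fin d))ˣ)
    (hXunitary : star (X : EuclideanSpace ℂ (Fin d) →L[ℂ] EuclideanSpace ℂ (Fin d)) = ↑X⁻¹)
    (hXN : (X : EuclideanSpace ℂ (Fin d) →L[ℂ] EuclideanSpace ℂ (Fin d)) ^ N = 1)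
    (hU₀ : ∀ t : ℝ, 0 ≤ t → t < T → ∀ l : ℤ,
      U₀ (t + l * T) = U₀ t * ((X ^ l : (EuclideanSpace ℂ (Fin d) →L[ℂ] EuclideanSpace ℂ (Fin d))ˣ) :
        EuclideanSpace ℂ (Fin d) →L[ℂ] EuclideanSpace ℂ (Fin d)))
    (m : ℤ) :
    (X : EuclideanSpace ℂ (Fin d) →L[ℂ] EuclideanSpace ℂ (Fin d)) *
        ((1 / (N * T : ℂ)) • ∫ t in (0:ℝ)..(N * T),
          Complex.exp (I * m * (2 * π / T) * t / N) • (star (U₀ t) * V t * U₀ t)) * ↑X⁻¹ =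
      Complex.exp (2 * π * I * m / N) •
        ((1 / (N * T : ℂ)) • ∫ t in (0:ℝ)..(N * T),
          Complex.exp (I * m * (2 * π / T) * t / N) • (star (U₀ t) * V t * U₀ t)) := by
  have hT0 : (T : ℝ) ≠ 0 := ne_of_gt hT
  have hNC : (N : ℂ) ≠ 0 := Nat.cast_ne_zero.mpr hN.ne'
  have hTC : (T : ℂ) ≠ 0 := by exact_mod_cast hT0
  -- The evolution satisfies `U₀ (s + T) = U₀ s * X` for all real `s`.
  have hU₀' : ∀ s : ℝ, U₀ (s + T) = U₀ s * (↑X : EuclideanSpace ℂ (Fin d) →L[ℂ] EuclideanSpace ℂ (Fin d)) := by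
    intro s
    set l : ℤ := ⌊s / T⌋ with hl
    set t : ℝ := s - l * T with ht
    have h0 : 0 ≤ t := by
      have h1 : (l : ℝ) * T ≤ s := by
        rw [hl]
        calc (⌊s / T⌋ : ℝ) * T ≤ (s / T) * T :=
              mul_le_mul_of_nonneg_right (Int.floor_le _) hT.le
          _ = s := by field_simp
      simp only [ht]; linarith
    have h1 : t < T := by
      have h2 : s / T < l + 1 := Int.lt_floor_add_one (s / T)
      have h3 : s < ((l : ℝ) + 1) * T := by
        have := mul_lt_mul_of_pos_right h2 hT
        rwa [div_mul_cancel₀ _ hT0] at this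
      simp only [ht]; nlinarith
    have hst : s = t + l * T := by rw [ht]; ring
    have hstT : s + T = t + (l + 1 : ℤ) * T := by rw [ht]; push_cast; ring
    rw [hstT, hst, hU₀ t h0 h1 l, hU₀ t h0 h1 (l + 1)]
    have hz : X ^ (l + 1) = X ^ l * X := by rw [zpow_add_one]
    rw [hz, Units.val_mul, mul_assoc]
  -- ... hence also `U₀ (t - T) = U₀ t * X⁻¹`.
  have hU₀'' : ∀ s : ℝ, U₀ (s - T) = U₀ s * (↑X⁻¹ : EuclideanSpace ℂ (Fin d) →L[ℂ] EuclideanSpace ℂ (Fin d)) := by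
    intro s
    have h := hU₀' (s - T)
    rw [sub_add_cancel] at h
    rw [h, mul_assoc]
    simp
  have hstarXinv : star (↑X⁻¹ : EuclideanSpace ℂ (Fin d) →L[ℂ] EuclideanSpace ℂ (Fin d)) = (↑X : EuclideanSpace ℂ (Fin d) →L[ℂ] EuclideanSpace ℂ (Fin d)) := by rw [← hXunitary, star_star]
  set g : ℝ → (EuclideanSpace ℂ (Fin d) →L[ℂ] EuclideanSpace ℂ (Fin d)) := fun t =>
    Complex.exp (I * m * (2 * π / T) * t / N) • (star (U₀ t) * V t * U₀ t) with hg
  -- `g` is periodic with period `N * T`.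
  have hVsub : ∀ s : ℝ, V (s - T) = V s := by
    intro s
    have h := hVper (s - T)
    rw [sub_add_cancel] at h
    exact h.symm
  have hgper : Function.Periodic g ((N : ℝ) * T) := by
    intro s
    have hUrec : ∀ (M : ℕ), U₀ (s + M * T) = U₀ s * (↑X : EuclideanSpace ℂ (Fin d) →L[ℂ] EuclideanSpace ℂ (Fin d)) ^ M := by
      intro M
      induction M with
      | zero => simp
      | succ k ihk =>
        have hs : s + (k + 1 : ℕ) * T = (s + k * T) + T := by push_cast; ring
        rw [hs, hU₀' (s + k * T), ihk, pow_succ, mul_assoc]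
    have hVrec : ∀ (M : ℕ), V (s + M * T) = V s := by
      intro M
      induction M with
      | zero => simp
      | succ k ihk =>
        have hs : s + (k + 1 : ℕ) * T = (s + k * T) + T := by push_cast; ring
        rw [hs, hVper, ihk]
    have hUNT : U₀ (s + N * T) = U₀ s := by rw [hUrec N, hXN, mul_one]
    have hVNT : V (s + N * T) = V s := hVrec N
    rw [hg]
    simp only [hUNT, hVNT]
    congr 1
    have hexp : I * m * (2 * π / T) * ((s : ℂ) + N * T) / N
        = I * m * (2 * π / T) * s / N + m * (2 * π * I) := by
      field_simp
    rw [show ((s + (N : ℝ) * T : ℝ) : ℂ) = (s : ℂ) + N * T by push_cast; ring, hexp,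
      Complex.exp_add, Complex.exp_int_mul_two_pi_mul_I, mul_one]
  -- Pointwise covariance: `X * g t * X⁻¹ = e^{2πim/N} • g (t - T)`.
  have hptwise : ∀ t : ℝ, (↑X : EuclideanSpace ℂ (Fin d) →L[ℂ] EuclideanSpace ℂ (Fin d)) * g t * (↑X⁻¹ : EuclideanSpace ℂ (Fin d) →L[ℂ] EuclideanSpace ℂ (Fin d)) =
      Complex.exp (2 * π * I * m / N) • g (t - T) := by
    intro t
    have hfconj : star (U₀ (t - T)) * V (t - T) * U₀ (t - T)
        = (↑X : EuclideanSpace ℂ (Fin d) →L[ℂ] EuclideanSpace ℂ (Fin d)) * (star (U₀ t) * V t * U₀ t) * (↑X⁻¹ : EuclideanSpace ℂ (Fin d) →L[ℂ] EuclideanSpace ℂ (Fin d)) := by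
      rw [hU₀'' t, hVsub t, star_mul, hstarXinv]
      simp only [mul_assoc]
    rw [hg]
    simp only [hfconj]
    rw [mul_smul_comm, smul_mul_assoc, smul_smul]
    congr 1
    rw [← Complex.exp_add]
    congr 1
    have : ((t - T : ℝ) : ℂ) = (t : ℂ) - T := by push_cast; ring
    rw [this]
    field_simp
    ring
  -- Shift invariance of the integral.
  have key : (∫ t in (0:ℝ)..((N:ℝ) * T), g (t - T)) = ∫ t in (0:ℝ)..((N:ℝ) * T), g t := by
    rw [intervalIntegral.integral_comp_sub_right g T]
    have h := hgper.intervalIntegral_add_eq (0 - T) 0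
    rw [zero_sub, zero_add] at h
    rw [show (0:ℝ) - T = -T by ring, show (N:ℝ) * T - T = -T + (N:ℝ) * T by ring]
    exact h
  by_cases hint : IntervalIntegrable g MeasureTheory.volume 0 ((N:ℝ) * T)
  · have hcomm : (∫ t in (0:ℝ)..((N:ℝ) * T), conjCLM (↑X : EuclideanSpace ℂ (Fin d) →L[ℂ] EuclideanSpace ℂ (Fin d)) (↑X⁻¹ : EuclideanSpace ℂ (Fin d) →L[ℂ] EuclideanSpace ℂ (Fin d)) (g t))
        = conjCLM (↑X : EuclideanSpace ℂ (Fin d) →L[ℂ] EuclideanSpace ℂ (Fin d)) (↑X⁻¹ : EuclideanSpace ℂ (Fin d) →L[ℂ] EuclideanSpace ℂ (Fin d)) (∫ t in (0:ℝ)..((N:ℝ) * T), g t) :=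
      ContinuousLinearMap.intervalIntegral_comp_comm _ hint
    calc (↑X : EuclideanSpace ℂ (Fin d) →L[ℂ] EuclideanSpace ℂ (Fin d)) * ((1 / (N * T : ℂ)) • ∫ t in (0:ℝ)..((N:ℝ) * T), g t) * (↑X⁻¹ : EuclideanSpace ℂ (Fin d) →L[ℂ] EuclideanSpace ℂ (Fin d))
        = (1 / (N * T : ℂ)) • ((↑X : EuclideanSpace ℂ (Fin d) →L[ℂ] EuclideanSpace ℂ (Fin d)) * (∫ t in (0:ℝ)..((N:ℝ) * T), g t) * (↑X⁻¹ : EuclideanSpace ℂ (Fin d) →L[ℂ] EuclideanSpace ℂ (Fin d))) := by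
          rw [mul_smul_comm, smul_mul_assoc]
      _ = (1 / (N * T : ℂ)) • ∫ t in (0:ℝ)..((N:ℝ) * T), (↑X : EuclideanSpace ℂ (Fin d) →L[ℂ] EuclideanSpace ℂ (Fin d)) * g t * (↑X⁻¹ : EuclideanSpace ℂ (Fin d) →L[ℂ] EuclideanSpace ℂ (Fin d)) := by
          simp only [conjCLM_apply] at hcomm
          rw [← hcomm]
      _ = (1 / (N * T : ℂ)) • ∫ t in (0:ℝ)..((N:ℝ) * T),
            Complex.exp (2 * π * I * m / N) • g (t - T) := by
          simp only [hptwise]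
      _ = (1 / (N * T : ℂ)) •
            (Complex.exp (2 * π * I * m / N) • ∫ t in (0:ℝ)..((N:ℝ) * T), g (t - T)) := by
          rw [intervalIntegral.integral_smul]
      _ = Complex.exp (2 * π * I * m / N) •
            ((1 / (N * T : ℂ)) • ∫ t in (0:ℝ)..((N:ℝ) * T), g t) := by
          rw [key, smul_comm]
  · rw [intervalIntegral.integral_undef hint]
    have h0 : (1 / ((N:ℂ) * T)) • (0 : EuclideanSpace ℂ (Fin d) →L[ℂ] EuclideanSpace ℂ (Fin d)) = 0 :=
      by ext x; simp
    have h1 : Complex.exp (2 * π * I * m / N) • (0 : EuclideanSpace ℂ (Fin d) →L[ℂ] EuclideanSpace ℂ (Fin d)) = 0 :=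
      by ext x; simp
    rw [h0, mul_zero, zero_mul, h1]
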